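/- arXiv:2505.22448 — 5 statements merged into one kernel-verified Lean document; each statement's English description precedes it below -/
import Mathlib

section
/- Let f, g : [0,1] → ℕ̄ be lower semicontinuous. Then the following are equivalent: (i) for every t ∈ [0,1] there exist an open neighborhood U of t in [0,1] and a natural number c ∈ ℕ such that f(s) ≤ c ≤ g(s) for all s ∈ U; (ii) there exists a continuous function g̃ : [0,1] → ℝ such that f(t) ≤ g̃(t) ≤ g(t) for every t ∈ [0,1]. -/
open scoped ENNReal

/-- The canonical order embedding of `ℕ∞ = ℕ ∪ {∞}` into the extended reals,
used to compare `ℕ∞`-valued functions with real-valued functions: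
`f t ≤ (g̃ t : EReal)` says that `f t` is a finite natural number whose real coercion
is at most `g̃ t`, and `(g̃ t : EReal) ≤ g t` is interpreted with `∞` dominating
every real number. -/
noncomputable def ENat.toEReal (a : ℕ∞) : EReal := ((a : ℝ≥0∞) : EReal)

lemma toEReal_mono {a b : ℕ∞} (h : a ≤ b) : a.toEReal ≤ b.toEReal := by
  unfold ENat.toEReal
  exact EReal.coe_ennreal_le_coe_ennreal_iff.2 (by exact_mod_cast h)

lemma toEReal_natCast (n : ℕ) : ENat.toEReal (n : ℕ∞) = ((n : ℝ) : EReal) := by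
  unfold ENat.toEReal
  norm_cast

lemma toEReal_top : ENat.toEReal ⊤ = ⊤ := by
  unfold ENat.toEReal; simp

lemma convex_t (a b : ℕ∞) : Convex ℝ {y : ℝ | a.toEReal ≤ (y : EReal) ∧ (y : EReal) ≤ b.toEReal} := by
  apply Set.OrdConnected.convex
  constructor
  intro y₁ h₁ y₂ h₂ z hz
  exact ⟨le_trans h₁.1 (EReal.coe_le_coe_iff.2 hz.1),
    le_trans (EReal.coe_le_coe_iff.2 hz.2) h₂.2⟩

lemma exists_nat_eq {a : ℕ∞} (h : a ≠ ⊤) : ∃ m : ℕ, a = (m : ℕ∞) := by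
  induction a using ENat.recTopCoe with
  | top => exact absurd rfl h
  | coe m => exact ⟨m, rfl⟩

lemma ne_top_of_le_real {a : ℕ∞} {y : ℝ} (h : a.toEReal ≤ (y : EReal)) : a ≠ ⊤ := by
  intro ht
  rw [ht, toEReal_top] at h
  exact absurd h (by simp)

/-- For lower semicontinuous `f, g : [0,1] → ℕ∞`, the local interpolation
condition (around every point there are an open neighborhood `U` and `c ∈ ℕ` with
`f ≤ c ≤ g` on `U`) holds if and only if there is a continuous real-valued function `g̃`
with `f ≤ g̃ ≤ g` pointwise on `[0,1]`. -/
theorem stmt_4 (f g : Set.Icc (0:ℝ) 1 → ℕ∞)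
    (hf : LowerSemicontinuous f) (hg : LowerSemicontinuous g) :
    (∀ t : Set.Icc (0:ℝ) 1, ∃ U : Set (Set.Icc (0:ℝ) 1), IsOpen U ∧ t ∈ U ∧
        ∃ c : ℕ, ∀ s ∈ U, f s ≤ (c : ℕ∞) ∧ (c : ℕ∞) ≤ g s) ↔
      (∃ g' : Set.Icc (0:ℝ) 1 → ℝ, Continuous g' ∧
        ∀ t, (f t).toEReal ≤ (g' t : EReal) ∧ (g' t : EReal) ≤ (g t).toEReal) := by
  constructor
  · intro h
    have H : ∀ x : Set.Icc (0:ℝ) 1, ∃ c : ℝ, ∀ᶠ y in nhds x,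
        c ∈ {z : ℝ | (f y).toEReal ≤ (z : EReal) ∧ (z : EReal) ≤ (g y).toEReal} := by
      intro x
      obtain ⟨U, hUo, hxU, c, hc⟩ := h x
      refine ⟨(c : ℝ), Filter.eventually_of_mem (hUo.mem_nhds hxU) (fun y hy => ?_)⟩
      have h1 := toEReal_mono (hc y hy).1
      have h2 := toEReal_mono (hc y hy).2
      rw [toEReal_natCast] at h1 h2
      exact ⟨h1, h2⟩
    obtain ⟨G, hG⟩ := exists_continuous_forall_mem_convex_of_local_const
      (fun x => convex_t (f x) (g x)) H
    exact ⟨G, G.continuous, fun t => hG t⟩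
  · rintro ⟨g', hc, hb⟩ t
    have h0 : (0 : ℝ) ≤ g' t := by
      have h00 : ((0:ℝ) : EReal) ≤ ((g' t : ℝ) : EReal) := by
        rw [EReal.coe_zero]
        exact le_trans (EReal.coe_ennreal_nonneg _) (hb t).1
      exact EReal.coe_le_coe_iff.1 h00
    set n := ⌊g' t⌋₊ with hn
    refine ⟨g' ⁻¹' Set.Ioo ((n:ℝ) - 1) ((n:ℝ) + 1), (isOpen_Ioo).preimage hc, ?_, n, ?_⟩
    · exact Set.mem_preimage.2 ⟨by linarith [Nat.floor_le h0], Nat.lt_floor_add_one _⟩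
    · intro s hs
      obtain ⟨hs1, hs2⟩ := hs
      constructor
      · obtain ⟨m, hm⟩ := exists_nat_eq (ne_top_of_le_real (hb s).1)
        have h1 := (hb s).1
        rw [hm, toEReal_natCast] at h1
        have : (m : ℝ) < (n : ℝ) + 1 := lt_of_le_of_lt (EReal.coe_le_coe_iff.1 h1) hs2
        have hmn : m ≤ n := by exact_mod_cast Nat.lt_add_one_iff.1 (by exact_mod_cast this)
        rw [hm]
        exact_mod_cast hmn
      · rcases eq_or_ne (g s) ⊤ with h | h
        · rw [h]; exact le_top
        · obtain ⟨m, hm⟩ := exists_nat_eq h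
          have h2 := (hb s).2
          rw [hm, toEReal_natCast] at h2
          have : (n : ℝ) - 1 < (m : ℝ) := lt_of_lt_of_le hs1 (EReal.coe_le_coe_iff.1 h2)
          have hmn : n ≤ m := by
            by_contra hlt
            push_neg at hlt
            have : (m : ℝ) ≤ (n : ℝ) - 1 := by
              have : m + 1 ≤ n := hlt
              have := (Nat.cast_le (α := ℝ)).2 this
              push_cast at this
              linarith
            linarith
          rw [hm]
          exact_mod_cast hmn
end

section
/- Let H be a separable complex Hilbert space and let b : [0,1] → B(H) be a norm-continuous map such that b(t) is a positive compact operator for every t ∈ [0,1]. Then for every ε > 0 there exists N ∈ ℕ such that rank((b(t) − ε)₊) ≤ N for all t ∈ [0,1]. -/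
open scoped ENNReal

/-- The rank of a bounded operator: the Hilbert-space dimension (as an element of
`ℕ∞ = ℕ ∪ {∞}`) of the closure of its range. -/
noncomputable def opRank {H : Type*} [NormedAddCommGroup H] [InnerProductSpace ℂ H]
    (a : H →L[ℂ] H) : ℕ∞ :=
  Cardinal.toENat (Module.rank ℂ (LinearMap.range (a : H →ₗ[ℂ] H)).topologicalClosure)

/-- The `ε`-cut-down `(a - ε)₊` of an operator, i.e. the continuous functional calculus of
`a` applied to the function `s ↦ max (s - ε) 0`. -/
noncomputable def cutDown {H : Type*} [NormedAddCommGroup H] [InnerProductSpace ℂ H]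
    [CompleteSpace H] (a : H →L[ℂ] H) (ε : ℝ) : H →L[ℂ] H :=
  cfc (fun s : ℝ => max (s - ε) 0) a

open scoped InnerProductSpace

section Aux

variable {H : Type*} [NormedAddCommGroup H] [InnerProductSpace ℂ H] [CompleteSpace H]

lemma cutDown_isSelfAdjoint (a : H →L[ℂ] H) (ε : ℝ) : IsSelfAdjoint (cutDown a ε) :=
  cfc_predicate _ a

/-- On the closure of the range of the cut-down `(a - ε)₊`, the quadratic form of `a`
is bounded below by `ε ‖x‖²`. -/
lemma aux_key1 {a : H →L[ℂ] H} (ha : a.IsPositive) {ε : ℝ} {x : H}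
    (hx : x ∈ (LinearMap.range (cutDown a ε : H →ₗ[ℂ] H)).topologicalClosure) :
    ε * ‖x‖ ^ 2 ≤ RCLike.re ⟪a x, x⟫_ℂ := by
  have hsa : IsSelfAdjoint a := ha.isSelfAdjoint
  set f : ℝ → ℝ := fun s => max (s - ε) 0 with hfdef
  have hf : Continuous f := (continuous_id.sub continuous_const).max continuous_const
  set d : H →L[ℂ] H := cutDown a ε with hddef
  have hd : IsSelfAdjoint d := cutDown_isSelfAdjoint a ε
  have hpos : (0 : H →L[ℂ] H) ≤ cfc (fun s => s * (f s * f s) - ε * (f s * f s)) a := by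
    refine cfc_nonneg fun s _ => ?_
    rcases le_or_gt s ε with h | h
    · have : f s = 0 := max_eq_right (by linarith)
      simp [this]
    · have : f s = s - ε := max_eq_left (by linarith)
      rw [this]; nlinarith
  have heq : cfc (fun s => s * (f s * f s) - ε * (f s * f s)) a
      = a * (d * d) - ε • (d * d) := by
    rw [cfc_sub (fun s => s * (f s * f s)) (fun s => ε * (f s * f s)) a
        (by fun_prop) (by fun_prop),
      cfc_mul _ _ a (by fun_prop) (by fun_prop),
      cfc_mul _ _ a (by fun_prop) (by fun_prop),
      cfc_const_mul _ _ a (by fun_prop),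
      cfc_mul _ _ a (by fun_prop) (by fun_prop),
      cfc_id' ℝ a]
    rfl
  have hcomm : a * d = d * a := by
    conv_lhs => rw [← cfc_id' ℝ a, hddef, cutDown, ← cfc_mul _ _ a (by fun_prop) (by fun_prop)]
    conv_rhs => rw [← cfc_id' ℝ a, hddef, cutDown, ← cfc_mul _ _ a (by fun_prop) (by fun_prop)]
    exact cfc_congr fun s _ => mul_comm _ _
  rw [heq] at hpos
  have hrange : ∀ y : H, ε * ‖d y‖ ^ 2 ≤ RCLike.re ⟪a (d y), d y⟫_ℂ := by
    intro y
    have h0 := ((ContinuousLinearMap.nonneg_iff_isPositive _).mp hpos).re_inner_nonneg_left y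
    have happ : (a * (d * d) - ε • (d * d)) y = d (a (d y)) - ε • d (d y) := by
      have h4 : a * (d * d) = d * (a * d) := by rw [← mul_assoc, ← mul_assoc, hcomm]
      rw [h4]
      rfl
    rw [happ] at h0
    have h1 : ⟪d (a (d y)), y⟫_ℂ = ⟪a (d y), d y⟫_ℂ := hd.isSymmetric (a (d y)) y
    have h2 : ⟪d (d y), y⟫_ℂ = ⟪d y, d y⟫_ℂ := hd.isSymmetric (d y) y
    have h3 : RCLike.re ⟪ε • d (d y), y⟫_ℂ = ε * ‖d y‖ ^ 2 := by
      rw [RCLike.real_smul_eq_coe_smul (K := ℂ), inner_smul_left, RCLike.conj_ofReal,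
        RCLike.re_ofReal_mul, h2, inner_self_eq_norm_sq]
    rw [inner_sub_left, map_sub, h1, h3] at h0
    linarith
  have hclosed : IsClosed {x : H | ε * ‖x‖ ^ 2 ≤ RCLike.re ⟪a x, x⟫_ℂ} := by
    apply isClosed_le
    · fun_prop
    · exact RCLike.continuous_re.comp ((a.continuous.inner continuous_id))
  have hsub : (LinearMap.range (d : H →ₗ[ℂ] H) : Set H) ⊆ {x : H | ε * ‖x‖ ^ 2 ≤ RCLike.re ⟪a x, x⟫_ℂ} := by
    rintro _ ⟨y, rfl⟩
    exact hrange y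
  have hxcl : x ∈ closure (LinearMap.range (d : H →ₗ[ℂ] H) : Set H) := by
    rw [← SetLike.mem_coe, Submodule.topologicalClosure_coe] at hx
    exact hx
  exact closure_minimal hsub hclosed hxcl

/-- A closed subspace on which a compact operator is bounded below is finite dimensional. -/
lemma aux_key2 {a : H →L[ℂ] H} (hc : IsCompactOperator a) {ε : ℝ} (hε : 0 < ε)
    (S : Submodule ℂ H) (hcl : IsClosed (S : Set H))
    (hS : ∀ x ∈ S, ε * ‖x‖ ≤ ‖a x‖) : FiniteDimensional ℂ S := by
  haveI : CompleteSpace S := hcl.completeSpace_coe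
  set j : S →L[ℂ] H := a.comp S.subtypeL with hj
  have hanti : AntilipschitzWith (Real.toNNReal ε)⁻¹ j := by
    refine AntilipschitzWith.of_le_mul_dist fun x y => ?_
    have h1 : ε * ‖(x : H) - y‖ ≤ ‖a ((x:H) - y)‖ := hS _ (S.sub_mem x.2 y.2)
    have h2 : dist (j x) (j y) = ‖a ((x:H) - y)‖ := by
      simp [hj, dist_eq_norm, ← map_sub]
    rw [dist_eq_norm, h2]
    calc ‖x - y‖ = ε⁻¹ * (ε * ‖(x:H) - y‖) := by
          rw [← mul_assoc, inv_mul_cancel₀ hε.ne', one_mul]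
          norm_cast
      _ ≤ ε⁻¹ * ‖a ((x:H) - y)‖ := by
          gcongr
      _ = (Real.toNNReal ε)⁻¹ * ‖a ((x:H) - y)‖ := by
          rw [NNReal.coe_inv, Real.coe_toNNReal _ hε.le]
  have hui : IsUniformInducing j := hanti.isUniformInducing j.uniformContinuous
  obtain ⟨K, hK, hKsub⟩ := hc.image_closedBall_subset_compact (𝕜₁ := ℂ) 1
  have htb : TotallyBounded (Metric.closedBall (0 : S) 1) := by
    rw [← totallyBounded_image_iff hui]
    refine (hK.totallyBounded).subset ?_
    refine Set.Subset.trans ?_ hKsub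
    rintro _ ⟨x, hx, rfl⟩
    exact ⟨(x : H), by simpa [Metric.mem_closedBall, dist_eq_norm] using hx, rfl⟩
  have hcompact : IsCompact (Metric.closedBall (0 : S) 1) :=
    TotallyBounded.isCompact_of_isClosed htb Metric.isClosed_closedBall
  exact FiniteDimensional.of_isCompact_closedBall₀ ℂ one_pos hcompact

/-- If the cut-down kills `x`, the quadratic form of `a` at `x` is at most `δ ‖x‖²`. -/
lemma aux_key3 {a : H →L[ℂ] H} (ha : a.IsPositive) {δ : ℝ} {x : H}
    (hx : cutDown a δ x = 0) : RCLike.re ⟪a x, x⟫_ℂ ≤ δ * ‖x‖ ^ 2 := by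
  have hsa : IsSelfAdjoint a := ha.isSelfAdjoint
  have hle : a ≤ algebraMap ℝ (H →L[ℂ] H) δ + cutDown a δ := by
    conv_lhs => rw [← cfc_id' ℝ a]
    rw [cutDown, ← cfc_const_add δ _ a (by fun_prop)]
    refine cfc_mono (fun s _ => ?_) (by fun_prop) (by fun_prop)
    have h2 := le_max_left (s - δ) (0:ℝ)
    show s ≤ δ + max (s - δ) 0
    linarith
  have hp := ((ContinuousLinearMap.nonneg_iff_isPositive _).mp
    (sub_nonneg.mpr hle)).re_inner_nonneg_left x
  have happ : (algebraMap ℝ (H →L[ℂ] H) δ + cutDown a δ - a) x = δ • x - a x := by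
    simp [ContinuousLinearMap.sub_apply, ContinuousLinearMap.add_apply, hx,
      Algebra.algebraMap_eq_smul_one]
  rw [happ, inner_sub_left, map_sub, RCLike.real_smul_eq_coe_smul (K := ℂ), inner_smul_left,
    RCLike.conj_ofReal, RCLike.re_ofReal_mul, inner_self_eq_norm_sq] at hp
  linarith

/-- Vectors orthogonal to the closed range of the cut-down are killed by it. -/
lemma aux_keyD {a : H →L[ℂ] H} {δ : ℝ} {x : H}
    (hx : x ∈ ((LinearMap.range (cutDown a δ : H →ₗ[ℂ] H)).topologicalClosure)ᗮ) :
    cutDown a δ x = 0 := by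
  set d := cutDown a δ with hd
  have hsa : IsSelfAdjoint d := cfc_predicate _ a
  have h1 : ⟪d x, d x⟫_ℂ = ⟪d (d x), x⟫_ℂ := (hsa.isSymmetric (d x) x).symm
  have h2 : ⟪d (d x), x⟫_ℂ = 0 := by
    refine (Submodule.mem_orthogonal _ x).mp hx _ ?_
    exact Submodule.le_topologicalClosure _ ⟨d x, rfl⟩
  rw [h2] at h1
  exact inner_self_eq_zero.mp h1

end Aux

set_option maxHeartbeats 2000000 in
/-- If `b : [0,1] → B(H)` is a norm-continuous family of positive compact
operators on a separable complex Hilbert space `H`, then for every `ε > 0` the ranks of the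
cut-downs `(b t − ε)₊` are uniformly bounded by some `N ∈ ℕ`. -/
theorem stmt_7 {H : Type*} [NormedAddCommGroup H] [InnerProductSpace ℂ H] [CompleteSpace H]
    [TopologicalSpace.SeparableSpace H]
    (b : Set.Icc (0:ℝ) 1 → H →L[ℂ] H) (hb : Continuous b)
    (hpos : ∀ t, (b t).IsPositive) (hcpt : ∀ t, IsCompactOperator (b t))
    (ε : ℝ) (hε : 0 < ε) :
    ∃ N : ℕ, ∀ t, opRank (cutDown (b t) ε) ≤ (N : ℕ∞) := by
  classical
  set δ := ε / 4 with hδdef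
  have hδ : 0 < δ := by positivity
  set W : Set.Icc (0:ℝ) 1 → Submodule ℂ H :=
    fun t₀ => (LinearMap.range (cutDown (b t₀) δ : H →ₗ[ℂ] H)).topologicalClosure with hW
  have hWfin : ∀ t₀, FiniteDimensional ℂ (W t₀) := by
    intro t₀
    refine aux_key2 (hcpt t₀) hδ _ (Submodule.isClosed_topologicalClosure _) ?_
    intro x hx
    have h1 := aux_key1 (hpos t₀) (ε := δ) hx
    rcases eq_or_ne x 0 with rfl | hx0
    · simp
    · have h2 : RCLike.re ⟪(b t₀) x, x⟫_ℂ ≤ ‖(b t₀) x‖ * ‖x‖ :=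
        le_trans (RCLike.re_le_norm _) ((norm_inner_le_norm _ _))
      have h3 : 0 < ‖x‖ := norm_pos_iff.mpr hx0
      nlinarith [h1.trans h2]
  -- finite subcover
  obtain ⟨s, hs⟩ := isCompact_univ.elim_finite_subcover
    (fun t₀ : Set.Icc (0:ℝ) 1 => {t' | ‖b t' - b t₀‖ < δ})
    (fun t₀ => isOpen_lt (by fun_prop) continuous_const)
    (fun t _ => Set.mem_iUnion.mpr ⟨t, by simpa using hδ⟩)
  refine ⟨s.sup fun t₀ => Module.finrank ℂ (W t₀), fun t => ?_⟩
  obtain ⟨t₀, ht₀s, ht₀⟩ : ∃ t₀ ∈ s, ‖b t - b t₀‖ < δ := by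
    have := hs (Set.mem_univ t)
    simpa using this
  haveI := hWfin t₀
  set V : Submodule ℂ H := (LinearMap.range (cutDown (b t) ε : H →ₗ[ℂ] H)).topologicalClosure with hV
  set φ : V →ₗ[ℂ] W t₀ :=
    ((Submodule.orthogonalProjectionOnto (W t₀)).toLinearMap).comp (V.subtype) with hφ
  have hinj : Function.Injective φ := by
    rw [← LinearMap.ker_eq_bot, LinearMap.ker_eq_bot']
    intro x hxker
    have hproj : Submodule.orthogonalProjectionOnto (W t₀) (x : H) = 0 := hxker
    have hortho : (x : H) ∈ (W t₀)ᗮ := by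
      rwa [Submodule.orthogonalProjectionOnto_eq_zero_iff] at hproj
    have hd0 : cutDown (b t₀) δ (x : H) = 0 := aux_keyD hortho
    have h1 : ε * ‖(x:H)‖ ^ 2 ≤ RCLike.re ⟪(b t) (x:H), (x:H)⟫_ℂ := aux_key1 (hpos t) x.2
    have h2 : RCLike.re ⟪(b t₀) (x:H), (x:H)⟫_ℂ ≤ δ * ‖(x:H)‖ ^ 2 := aux_key3 (hpos t₀) hd0
    have h3 : RCLike.re ⟪(b t) (x:H), (x:H)⟫_ℂ - RCLike.re ⟪(b t₀) (x:H), (x:H)⟫_ℂ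
        ≤ ‖b t - b t₀‖ * ‖(x:H)‖ ^ 2 := by
      have e1 : RCLike.re ⟪(b t) (x:H), (x:H)⟫_ℂ - RCLike.re ⟪(b t₀) (x:H), (x:H)⟫_ℂ
          = RCLike.re ⟪(b t - b t₀) (x:H), (x:H)⟫_ℂ := by
        rw [ContinuousLinearMap.sub_apply, inner_sub_left, map_sub]
      rw [e1]
      calc RCLike.re ⟪(b t - b t₀) (x:H), (x:H)⟫_ℂ
          ≤ ‖⟪(b t - b t₀) (x:H), (x:H)⟫_ℂ‖ := RCLike.re_le_norm _
        _ ≤ ‖(b t - b t₀) (x:H)‖ * ‖(x:H)‖ := norm_inner_le_norm _ _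
        _ ≤ (‖b t - b t₀‖ * ‖(x:H)‖) * ‖(x:H)‖ := by
            gcongr
            exact (b t - b t₀).le_opNorm _
        _ = ‖b t - b t₀‖ * ‖(x:H)‖ ^ 2 := by ring
    have hx2 : ‖(x:H)‖ ^ 2 = 0 := by nlinarith [sq_nonneg ‖(x:H)‖]
    have : (x : H) = 0 := by
      have := pow_eq_zero_iff (n := 2) (by norm_num) |>.mp hx2
      simpa using this
    exact Subtype.ext this
  calc opRank (cutDown (b t) ε) = Cardinal.toENat (Module.rank ℂ V) := rfl
    _ ≤ Cardinal.toENat (Module.rank ℂ (W t₀)) :=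
        OrderHomClass.mono Cardinal.toENat (LinearMap.rank_le_of_injective φ hinj)
    _ = (Module.finrank ℂ (W t₀) : ℕ∞) := by rw [← Module.finrank_eq_rank]; simp
    _ ≤ _ := by
        have : Module.finrank ℂ (W t₀) ≤ s.sup fun t₀ => Module.finrank ℂ (W t₀) :=
          Finset.le_sup (f := fun t₀ => Module.finrank ℂ (W t₀)) ht₀s
        exact_mod_cast this
end

section
/- Let H be a separable complex Hilbert space, let a, b : [0,1] → B(H) be norm-continuous maps whose values are positive compact operators, and let ε > 0. Suppose rank(a(t)) ≤ rank((b(t) − ε)₊) for every t ∈ [0,1]. Then there exists a continuous function g : [0,1] → [0,∞) such that rank(a(t)) ≤ g(t) ≤ rank(b(t)) for all t ∈ [0,1]. -/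
open scoped ENNReal

open scoped InnerProductSpace

section Aux

variable {H : Type*} [NormedAddCommGroup H] [InnerProductSpace ℂ H] [CompleteSpace H]

omit [CompleteSpace H] in
lemma aux_re_smul_ineq (T S : H →L[ℂ] H) (δ : ℝ) (y : H)
    (h0 : 0 ≤ (T - δ • S).reApplyInnerSelf y) :
    δ * RCLike.re ⟪S y, y⟫_ℂ ≤ RCLike.re ⟪T y, y⟫_ℂ := by
  rw [ContinuousLinearMap.reApplyInnerSelf] at h0
  simp only [ContinuousLinearMap.sub_apply, ContinuousLinearMap.smul_apply, inner_sub_left,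
    map_sub, inner_smul_left_eq_smul, RCLike.smul_re] at h0
  linarith

lemma aux_quad_lower (a : H →L[ℂ] H) (ha : IsSelfAdjoint a) (δ : ℝ) (x : H)
    (hx : x ∈ (LinearMap.range (cutDown a δ : H →ₗ[ℂ] H)).topologicalClosure) :
    δ * ‖x‖ ^ 2 ≤ RCLike.re ⟪a x, x⟫_ℂ := by
  set f : ℝ → ℝ := fun s => max (s - δ) 0 with hf
  have hfc : Continuous f := by fun_prop
  set c : H →L[ℂ] H := cutDown a δ with hc
  have hcsa : IsSelfAdjoint c := cfc_predicate _ a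
  have key : (c * a * c - δ • (c * c)).IsPositive := by
    rw [← ContinuousLinearMap.nonneg_iff_isPositive]
    have h1 : c * a * c - δ • (c * c)
        = cfc (fun s => f s * s * f s - δ * (f s * f s)) a := by
      rw [cfc_sub _ _ a (by fun_prop) (by fun_prop),
        cfc_const_mul _ _ a (by fun_prop),
        cfc_mul _ _ a (by fun_prop) (by fun_prop),
        cfc_mul _ _ a (by fun_prop) (by fun_prop),
        cfc_mul _ _ a (by fun_prop) (by fun_prop), cfc_id' ℝ a]
      rfl
    rw [h1]
    refine cfc_nonneg fun s _ => ?_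
    rcases le_or_gt s δ with h | h
    · simp [hf, max_eq_right (by linarith : s - δ ≤ 0)]
    · have hfs : f s = s - δ := max_eq_left (by linarith)
      simp only [hfs]; nlinarith
  have hS : IsClosed {x : H | δ * ‖x‖ ^ 2 ≤ RCLike.re ⟪a x, x⟫_ℂ} := by
    apply isClosed_le
    · fun_prop
    · exact RCLike.continuous_re.comp (continuous_inner.comp
        ((a.continuous.comp continuous_id).prodMk continuous_id))
  have hrange : (LinearMap.range (c : H →ₗ[ℂ] H) : Set H) ⊆ {x : H | δ * ‖x‖ ^ 2 ≤ RCLike.re ⟪a x, x⟫_ℂ} := by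
    rintro _ ⟨y, rfl⟩
    have h0 := key.2 y
    have hkey := aux_re_smul_ineq (c * a * c) (c * c) δ y h0
    have hcc : ⟪c y, c y⟫_ℂ = ⟪(c * c) y, y⟫_ℂ := by
      rw [ContinuousLinearMap.mul_apply, ← ContinuousLinearMap.adjoint_inner_left c,
        hcsa.adjoint_eq]
    have hcac : ⟪a (c y), c y⟫_ℂ = ⟪(c * a * c) y, y⟫_ℂ := by
      rw [ContinuousLinearMap.mul_apply, ContinuousLinearMap.mul_apply,
        ← ContinuousLinearMap.adjoint_inner_left c, hcsa.adjoint_eq]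
    have hn : (‖c y‖ : ℝ) ^ 2 = RCLike.re ⟪(c * c) y, y⟫_ℂ := by
      rw [← hcc, inner_self_eq_norm_sq]
    show δ * ‖c y‖ ^ 2 ≤ RCLike.re ⟪a (c y), c y⟫_ℂ
    simp only [Set.mem_setOf_eq, hcac, hn]
    exact hkey
  have hx' : x ∈ closure (LinearMap.range (c : H →ₗ[ℂ] H) : Set H) := by
    rwa [← Submodule.topologicalClosure_coe]
  exact closure_minimal hrange hS hx'

lemma aux_re_sub_ineq (T S : H →L[ℂ] H) (h : (T - S).IsPositive) (x : H) :
    RCLike.re ⟪S x, x⟫_ℂ ≤ RCLike.re ⟪T x, x⟫_ℂ := by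
  have h0 := h.2 x
  rw [ContinuousLinearMap.reApplyInnerSelf] at h0
  simp only [ContinuousLinearMap.sub_apply, inner_sub_left, map_sub] at h0
  linarith

lemma aux_cutDown_ge (b : H →L[ℂ] H) (hb : IsSelfAdjoint b) (η : ℝ) (x : H) :
    RCLike.re ⟪b x, x⟫_ℂ - η * ‖x‖ ^ 2 ≤ RCLike.re ⟪cutDown b η x, x⟫_ℂ := by
  have key : (cutDown b η - (b - η • 1)).IsPositive := by
    rw [← ContinuousLinearMap.nonneg_iff_isPositive]
    have h1 : cutDown b η - (b - η • 1)
        = cfc (fun s : ℝ => max (s - η) 0 - (s - η)) b := by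
      rw [cfc_sub _ _ b (by fun_prop) (by fun_prop),
        cfc_sub _ _ b (by fun_prop) (by fun_prop), cfc_id' ℝ b, cfc_const η b]
      rw [Algebra.algebraMap_eq_smul_one]
      rfl
    rw [h1]
    exact cfc_nonneg fun s _ => by simp [sub_nonneg, le_max_iff, le_refl]
  have h2 := aux_re_sub_ineq _ _ key x
  have h3 : RCLike.re ⟪(b - η • 1) x, x⟫_ℂ = RCLike.re ⟪b x, x⟫_ℂ - η * ‖x‖ ^ 2 := by
    simp only [ContinuousLinearMap.sub_apply, ContinuousLinearMap.smul_apply,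
      ContinuousLinearMap.one_apply, inner_sub_left, map_sub, inner_smul_left_eq_smul,
      RCLike.smul_re, inner_self_eq_norm_sq]
  rw [h3] at h2
  linarith

lemma aux_norm_lower (a b : H →L[ℂ] H) (ha : IsSelfAdjoint a) (hb : IsSelfAdjoint b)
    {δ' η : ℝ} (x : H)
    (hx : x ∈ (LinearMap.range (cutDown a δ' : H →ₗ[ℂ] H)).topologicalClosure)
    (hc : 0 < δ' - ‖a - b‖ - η) :
    (δ' - ‖a - b‖ - η) * ‖x‖ ≤ ‖cutDown b η x‖ := by
  have h1 := aux_quad_lower a ha δ' x hx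
  have h2 : RCLike.re ⟪a x, x⟫_ℂ - RCLike.re ⟪b x, x⟫_ℂ ≤ ‖a - b‖ * ‖x‖ ^ 2 := by
    have e1 : RCLike.re ⟪a x, x⟫_ℂ - RCLike.re ⟪b x, x⟫_ℂ = RCLike.re ⟪(a - b) x, x⟫_ℂ := by
      simp [ContinuousLinearMap.sub_apply, inner_sub_left]
    rw [e1]
    calc RCLike.re ⟪(a - b) x, x⟫_ℂ ≤ ‖⟪(a - b) x, x⟫_ℂ‖ := RCLike.re_le_norm _
      _ ≤ ‖(a - b) x‖ * ‖x‖ := norm_inner_le_norm _ _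
      _ ≤ (‖a - b‖ * ‖x‖) * ‖x‖ := by
          gcongr; exact (a - b).le_opNorm x
      _ = ‖a - b‖ * ‖x‖ ^ 2 := by ring
  have h3 := aux_cutDown_ge b hb η x
  have h4 : RCLike.re ⟪cutDown b η x, x⟫_ℂ ≤ ‖cutDown b η x‖ * ‖x‖ :=
    le_trans (RCLike.re_le_norm _) (norm_inner_le_norm _ _)
  have h5 : (δ' - ‖a - b‖ - η) * ‖x‖ ^ 2 ≤ ‖cutDown b η x‖ * ‖x‖ := by nlinarith
  rcases eq_or_lt_of_le (norm_nonneg x) with h | h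
  · rw [← h]; simp
  · rw [← mul_le_mul_iff_of_pos_right h]
    calc (δ' - ‖a - b‖ - η) * ‖x‖ * ‖x‖ = (δ' - ‖a - b‖ - η) * ‖x‖ ^ 2 := by ring
      _ ≤ ‖cutDown b η x‖ * ‖x‖ := h5

lemma aux_opRank_cutDown_le (a b : H →L[ℂ] H) (ha : IsSelfAdjoint a) (hb : IsSelfAdjoint b)
    {δ' η : ℝ} (hlt : ‖a - b‖ + η < δ') :
    opRank (cutDown a δ') ≤ opRank (cutDown b η) := by
  set V := (LinearMap.range (cutDown a δ' : H →ₗ[ℂ] H)).topologicalClosure with hV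
  set W := (LinearMap.range (cutDown b η : H →ₗ[ℂ] H)).topologicalClosure with hW
  set w := cutDown b η with hw
  have hmem : ∀ v : V, w v ∈ W := fun v =>
    (LinearMap.range (w : H →ₗ[ℂ] H)).le_topologicalClosure (LinearMap.mem_range_self _ _)
  set φ : V →ₗ[ℂ] W := (w.toLinearMap.comp V.subtype).codRestrict W hmem with hφ
  have hcpos : 0 < δ' - ‖a - b‖ - η := by linarith
  have hinj : Function.Injective φ := by
    intro u v huv
    have h0 : w ((u : H) - v) = 0 := by
      have : w (u : H) = w (v : H) := congrArg Subtype.val huv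
      simp [map_sub, this]
    have hmemuv : ((u : H) - v) ∈ V := V.sub_mem u.2 v.2
    have := aux_norm_lower a b ha hb ((u : H) - v) hmemuv hcpos
    rw [← hw, h0, norm_zero] at this
    have : ‖(u : H) - v‖ = 0 :=
      le_antisymm (by nlinarith [norm_nonneg ((u:H) - v)]) (norm_nonneg _)
    have : (u : H) = v := by rwa [norm_sub_eq_zero_iff] at this
    exact Subtype.ext this
  have hrank : Module.rank ℂ V ≤ Module.rank ℂ W := LinearMap.rank_le_of_injective φ hinj
  exact Cardinal.toENat.monotone' hrank

lemma aux_cutDown_zero (b : H →L[ℂ] H) (hb : b.IsPositive) : cutDown b 0 = b := by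
  have hb' : (0:H →L[ℂ] H) ≤ b := b.nonneg_iff_isPositive.mpr hb
  have h1 : cutDown b 0 = cfc (fun s : ℝ => s) b := by
    refine cfc_congr fun s hs => ?_
    have := spectrum_nonneg_of_nonneg hb' hs
    simp [max_eq_left, this]
  rw [h1, cfc_id' ℝ b]

lemma aux_finDim_cutDown (b : H →L[ℂ] H) (hb : b.IsPositive) (hcpt : IsCompactOperator b)
    {ε : ℝ} (hε : 0 < ε) :
    FiniteDimensional ℂ ((LinearMap.range (cutDown b ε : H →ₗ[ℂ] H)).topologicalClosure : Submodule ℂ H) := by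
  set V := (LinearMap.range (cutDown b ε : H →ₗ[ℂ] H)).topologicalClosure with hV
  have hcs : CompleteSpace V := (Submodule.isClosed_topologicalClosure _).completeSpace_coe
  have hlow : ∀ v : V, ε * ‖v‖ ≤ ‖b v‖ := by
    intro v
    have := aux_norm_lower b b hb.isSelfAdjoint hb.isSelfAdjoint (η := 0) (δ' := ε) (v : H) v.2
      (by simp [hε])
    rw [aux_cutDown_zero b hb] at this
    simpa using this
  set B : V →L[ℂ] H := b.comp V.subtypeL with hB
  have hanti : AntilipschitzWith (⟨ε, hε.le⟩ : NNReal)⁻¹ B := by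
    refine B.antilipschitz_of_bound fun x => ?_
    have h1 : ε * ‖x‖ ≤ ‖B x‖ := by simpa [hB] using hlow x
    have h2 : ‖x‖ ≤ ε⁻¹ * ‖B x‖ := by
      rw [le_inv_mul_iff₀ hε]; exact h1
    exact h2
  have hui : IsUniformInducing B := hanti.isUniformInducing B.uniformContinuous
  obtain ⟨K, hKc, hKsub⟩ := hcpt.image_closedBall_subset_compact 1
  have hsub : Metric.closedBall (0 : V) 1 ⊆ B ⁻¹' K := by
    intro v hv
    apply hKsub
    refine ⟨(v : H), ?_, rfl⟩
    simpa [Metric.mem_closedBall, dist_eq_norm] using hv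
  have htb : TotallyBounded (Metric.closedBall (0 : V) 1) :=
    (totallyBounded_preimage hui hKc.totallyBounded).subset hsub
  have hcompact : IsCompact (Metric.closedBall (0 : V) 1) :=
    TotallyBounded.isCompact_of_isClosed htb Metric.isClosed_closedBall
  exact FiniteDimensional.of_isCompact_closedBall₀ ℂ zero_lt_one hcompact

lemma aux_opRank_cutDown_ne_top (b : H →L[ℂ] H) (hb : b.IsPositive)
    (hcpt : IsCompactOperator b) {ε : ℝ} (hε : 0 < ε) : opRank (cutDown b ε) ≠ ⊤ := by
  have := aux_finDim_cutDown b hb hcpt hε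
  rw [opRank, Ne, Cardinal.toENat_eq_top, not_le]
  exact Module.rank_lt_aleph0 ℂ _

lemma aux_toEReal_coe (n : ℕ) : ((n : ℕ∞)).toEReal = ((n : ℝ) : EReal) := by
  rw [ENat.toEReal]
  norm_cast

end Aux

set_option maxHeartbeats 1000000 in
/-- Let `a, b : [0,1] → B(H)` be norm-continuous families of positive
compact operators on a separable complex Hilbert space, let `ε > 0`, and suppose
`rank (a t) ≤ rank ((b t − ε)₊)` for all `t`.  Then there is a continuous function
`g : [0,1] → [0,∞)` with `rank (a t) ≤ g t ≤ rank (b t)` for all `t`. -/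
theorem stmt_8 {H : Type*} [NormedAddCommGroup H] [InnerProductSpace ℂ H] [CompleteSpace H]
    [TopologicalSpace.SeparableSpace H]
    (a b : Set.Icc (0:ℝ) 1 → H →L[ℂ] H) (ha : Continuous a) (hb : Continuous b)
    (hapos : ∀ t, (a t).IsPositive) (hacpt : ∀ t, IsCompactOperator (a t))
    (hbpos : ∀ t, (b t).IsPositive) (hbcpt : ∀ t, IsCompactOperator (b t))
    (ε : ℝ) (hε : 0 < ε)
    (hrank : ∀ t, opRank (a t) ≤ opRank (cutDown (b t) ε)) :
    ∃ g : Set.Icc (0:ℝ) 1 → ℝ, Continuous g ∧ (∀ t, 0 ≤ g t) ∧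
      ∀ t, (opRank (a t)).toEReal ≤ (g t : EReal) ∧
        (g t : EReal) ≤ (opRank (b t)).toEReal := by
  classical
  -- open cover
  set U : Set.Icc (0:ℝ) 1 → Set (Set.Icc (0:ℝ) 1) := fun t => {s | ‖b s - b t‖ < ε/4} with hU
  have hUopen : ∀ t, IsOpen (U t) := by
    intro t
    have : Continuous fun s => ‖b s - b t‖ := (hb.sub continuous_const).norm
    exact isOpen_lt this continuous_const
  have hUcover : (Set.univ : Set (Set.Icc (0:ℝ) 1)) ⊆ ⋃ t, U t := by
    intro s _
    exact Set.mem_iUnion.mpr ⟨s, by simp [hU, hε]⟩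
  obtain ⟨T, hT⟩ := isCompact_univ.elim_finite_subcover U hUopen hUcover
  -- the candidate values
  set c : Set.Icc (0:ℝ) 1 → ℕ := fun t => (opRank (cutDown (b t) (ε/2))).toNat with hcdef
  have hcfin : ∀ t, ((c t : ℕ∞)) = opRank (cutDown (b t) (ε/2)) := fun t =>
    ENat.coe_toNat (aux_opRank_cutDown_ne_top (b t) (hbpos t) (hbcpt t) (by linarith))
  -- key rank comparisons
  have keyLow : ∀ t s : Set.Icc (0:ℝ) 1, ‖b s - b t‖ < ε/4 → opRank (a s) ≤ (c t : ℕ∞) := by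
    intro t s hst
    rw [hcfin t]
    refine le_trans (hrank s) ?_
    exact aux_opRank_cutDown_le (b s) (b t) (hbpos s).isSelfAdjoint (hbpos t).isSelfAdjoint
      (by linarith)
  have keyHigh : ∀ t s : Set.Icc (0:ℝ) 1, ‖b s - b t‖ < ε/4 → (c t : ℕ∞) ≤ opRank (b s) := by
    intro t s hst
    rw [hcfin t]
    have h1 : opRank (cutDown (b t) (ε/2)) ≤ opRank (cutDown (b s) 0) := by
      refine aux_opRank_cutDown_le (b t) (b s) (hbpos t).isSelfAdjoint (hbpos s).isSelfAdjoint ?_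
      rw [norm_sub_rev] at hst
      linarith
    rwa [aux_cutDown_zero (b s) (hbpos s)] at h1
  -- bump functions
  set ψ : Set.Icc (0:ℝ) 1 → Set.Icc (0:ℝ) 1 → ℝ := fun t s => max (ε/4 - ‖b s - b t‖) 0 with hψ
  have hψcont : ∀ t, Continuous (ψ t) :=
    fun t => (continuous_const.sub (hb.sub continuous_const).norm).max continuous_const
  have hψnonneg : ∀ t s, 0 ≤ ψ t s := fun t s => le_max_right _ _
  have hψpos : ∀ t s, 0 < ψ t s → ‖b s - b t‖ < ε/4 := by
    intro t s h
    by_contra hcon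
    push_neg at hcon
    have : ψ t s = 0 := max_eq_right (by linarith)
    linarith
  set D : Set.Icc (0:ℝ) 1 → ℝ := fun s => ∑ t ∈ T, ψ t s with hD
  set N : Set.Icc (0:ℝ) 1 → ℝ := fun s => ∑ t ∈ T, ψ t s * c t with hN
  have hDpos : ∀ s, 0 < D s := by
    intro s
    obtain ⟨t, htT, hst⟩ := Set.mem_iUnion₂.mp (hT (Set.mem_univ s))
    refine Finset.sum_pos' (fun t _ => hψnonneg t s) ⟨t, htT, ?_⟩
    have : ‖b s - b t‖ < ε/4 := hst
    simp only [hψ]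
    exact lt_max_of_lt_left (by linarith)
  have hDcont : Continuous D := continuous_finset_sum _ fun t _ => hψcont t
  have hNcont : Continuous N := continuous_finset_sum _ fun t _ => (hψcont t).mul continuous_const
  refine ⟨fun s => N s / D s, hNcont.div hDcont fun s => (hDpos s).ne', ?_, ?_⟩
  · intro s
    exact div_nonneg (Finset.sum_nonneg fun t _ =>
      mul_nonneg (hψnonneg t s) (Nat.cast_nonneg _)) (hDpos s).le
  · intro s
    constructor
    · -- lower bound
      have hfin : opRank (a s) ≠ ⊤ := by
        intro htop
        have := hrank s
        rw [htop, top_le_iff] at this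
        exact aux_opRank_cutDown_ne_top (b s) (hbpos s) (hbcpt s) hε this
      set r : ℕ := (opRank (a s)).toNat with hr
      have hrval : ((r : ℕ∞)) = opRank (a s) := ENat.coe_toNat hfin
      have hrle : (r : ℝ) ≤ N s / D s := by
        rw [le_div_iff₀ (hDpos s)]
        have : ∀ t ∈ T, (r : ℝ) * ψ t s ≤ ψ t s * c t := by
          intro t _
          rcases eq_or_lt_of_le (hψnonneg t s) with h | h
          · rw [← h]; simp
          · have hst := hψpos t s h
            have := keyLow t s hst
            rw [← hrval] at this
            have hrc : r ≤ c t := by exact_mod_cast this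
            rw [mul_comm]
            exact mul_le_mul_of_nonneg_left (by exact_mod_cast hrc) (hψnonneg t s)
        calc (r : ℝ) * D s = ∑ t ∈ T, (r : ℝ) * ψ t s := by
              rw [hD, Finset.mul_sum]
          _ ≤ ∑ t ∈ T, ψ t s * c t := Finset.sum_le_sum this
          _ = N s := rfl
      rw [← hrval, aux_toEReal_coe]
      exact_mod_cast hrle
    · -- upper bound
      rcases eq_or_ne (opRank (b s)) ⊤ with htop | hfin
      · rw [htop]
        simp [ENat.toEReal]
      · set m : ℕ := (opRank (b s)).toNat with hm
        have hmval : ((m : ℕ∞)) = opRank (b s) := ENat.coe_toNat hfin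
        have hmle : N s / D s ≤ (m : ℝ) := by
          rw [div_le_iff₀ (hDpos s)]
          have : ∀ t ∈ T, ψ t s * c t ≤ (m : ℝ) * ψ t s := by
            intro t _
            rcases eq_or_lt_of_le (hψnonneg t s) with h | h
            · rw [← h]; simp
            · have hst := hψpos t s h
              have := keyHigh t s hst
              rw [← hmval] at this
              have hcm : c t ≤ m := by exact_mod_cast this
              rw [mul_comm]
              exact mul_le_mul_of_nonneg_right (show (c t : ℝ) ≤ (m : ℝ) by
                exact_mod_cast hcm) (hψnonneg t s)
          calc N s = ∑ t ∈ T, ψ t s * c t := rfl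
            _ ≤ ∑ t ∈ T, (m : ℝ) * ψ t s := Finset.sum_le_sum this
            _ = (m : ℝ) * D s := by rw [hD, Finset.mul_sum]
        rw [← hmval, aux_toEReal_coe]
        exact_mod_cast hmle
end

section
/- Let H be a complex Hilbert space, let c ∈ B(H) be a positive compact operator with rank(c) = n < ∞, let ε > 0, and let a ∈ B(H) be a positive operator with ‖a − c‖ < ε. Then rank((a − ε)₊) ≤ n. -/
open scoped ENNReal

lemma cutDown_key {H : Type*} [NormedAddCommGroup H] [InnerProductSpace ℂ H] [CompleteSpace H]
    (ε : ℝ) (a : H →L[ℂ] H) (hapos : a.IsPositive) (y : H) :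
    ε * ‖(cutDown a ε) y‖^2 ≤ RCLike.re (inner (𝕜 := ℂ) (a ((cutDown a ε) y)) ((cutDown a ε) y)) := by
  have ha : IsSelfAdjoint a := hapos.isSelfAdjoint
  set f : ℝ → ℝ := fun s => max (s - ε) 0 with hf
  have hfc : Continuous f := by fun_prop
  set b : H →L[ℂ] H := cutDown a ε with hb
  have hbsa : IsSelfAdjoint b := cfc_predicate _ a
  have h1 : cfc (fun s : ℝ => f s * s * f s) a = b * a * b := by
    rw [cfc_mul (fun s => f s * s) f a, cfc_mul f (fun s : ℝ => s) a, cfc_id' ℝ a]; rfl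
  have h2 : cfc (fun s : ℝ => ε * (f s * f s)) a = ε • (b * b) := by
    rw [cfc_const_mul ε (fun s => f s * f s) a, cfc_mul f f a]; rfl
  have h3 : (0 : H →L[ℂ] H) ≤ b * a * b - ε • (b * b) := by
    rw [← h1, ← h2, ← cfc_sub (fun s : ℝ => f s * s * f s) (fun s : ℝ => ε * (f s * f s)) a]
    apply cfc_nonneg
    intro s _
    have : f s * s * f s - ε * (f s * f s) = (s - ε) * (f s * f s) := by ring
    rw [this]
    rcases le_total (s - ε) 0 with h | h
    · have : f s = 0 := max_eq_right h
      simp [this]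
    · have hfs : f s = s - ε := max_eq_left h
      nlinarith [hfs]
  have h4 := ((ContinuousLinearMap.nonneg_iff_isPositive _).mp h3).inner_nonneg_left y
  have hsymm := (ContinuousLinearMap.isSelfAdjoint_iff_isSymmetric (𝕜 := ℂ)).mp hbsa
  have hba : ∀ u v : H, inner (𝕜 := ℂ) (b u) v = inner (𝕜 := ℂ) u (b v) := fun u v => hsymm u v
  have e1 : inner (𝕜 := ℂ) ((b * a * b - ε • (b * b)) y) y
      = inner (𝕜 := ℂ) (a (b y)) (b y) - ε • inner (𝕜 := ℂ) (b y) (b y) := by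
    simp only [ContinuousLinearMap.sub_apply, ContinuousLinearMap.smul_apply,
      ContinuousLinearMap.mul_apply, inner_sub_left]
    rw [hba (a (b y)) y]
    congr 1
    rw [← algebraMap_smul ℂ ε (b (b y)), RCLike.algebraMap_eq_ofReal, inner_smul_real_left,
      hba (b y) y]
  rw [e1] at h4
  replace h4 := (RCLike.nonneg_iff.mp h4).1
  rw [map_sub] at h4
  have h5 : RCLike.re (ε • inner (𝕜 := ℂ) (b y) (b y)) = ε * ‖b y‖^2 := by
    rw [RCLike.smul_re, inner_self_eq_norm_sq]
  rw [h5] at h4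
  linarith

/-- If `c` is a positive compact operator of finite rank `n` on a complex
Hilbert space, `ε > 0`, and `a` is a positive operator with `‖a − c‖ < ε`, then the
cut-down `(a − ε)₊` has rank at most `n`. -/
theorem stmt_10 {H : Type*} [NormedAddCommGroup H] [InnerProductSpace ℂ H] [CompleteSpace H]
    (c : H →L[ℂ] H) (hcpos : c.IsPositive) (hccpt : IsCompactOperator c)
    (n : ℕ) (hrank : opRank c = (n : ℕ∞))
    (ε : ℝ) (hε : 0 < ε)
    (a : H →L[ℂ] H) (hapos : a.IsPositive) (hnorm : ‖a - c‖ < ε) :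
    opRank (cutDown a ε) ≤ (n : ℕ∞) := by
  set b : H →L[ℂ] H := cutDown a ε with hb
  set W : Submodule ℂ H := (LinearMap.range (b : H →ₗ[ℂ] H)).topologicalClosure with hW
  set C : Submodule ℂ H := (LinearMap.range (c : H →ₗ[ℂ] H)).topologicalClosure with hC
  -- positivity on the closure of the range of b
  have key2 : ∀ x ∈ W, ε * ‖x‖^2 ≤ RCLike.re (inner (𝕜 := ℂ) (a x) x) := by
    have hclosed : IsClosed {x : H | ε * ‖x‖^2 ≤ RCLike.re (inner (𝕜 := ℂ) (a x) x)} :=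
      isClosed_le (by continuity)
        (RCLike.continuous_re.comp (a.continuous.inner continuous_id))
    intro x hx
    have hsub : (W : Set H) ⊆ {x : H | ε * ‖x‖^2 ≤ RCLike.re (inner (𝕜 := ℂ) (a x) x)} := by
      rw [hW, Submodule.topologicalClosure_coe]
      apply hclosed.closure_subset_iff.mpr
      rintro _ ⟨y, rfl⟩
      exact cutDown_key ε a hapos y
    exact hsub hx
  -- C is complete
  have hCc : CompleteSpace C := (Submodule.isClosed_topologicalClosure _).completeSpace_coe
  -- the projection onto C restricted to W is injective
  let φ : W →ₗ[ℂ] C := (C.orthogonalProjectionOnto).toLinearMap.comp W.subtype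
  have hφ : Function.Injective φ := by
    rw [← LinearMap.ker_eq_bot, LinearMap.ker_eq_bot']
    rintro ⟨x, hx⟩ h0
    have hxo : x ∈ Cᗮ := Submodule.orthogonalProjectionOnto_eq_zero_iff.mp h0
    ext
    by_contra hx0
    have hx0' : x ≠ 0 := hx0
    have hcx : inner (𝕜 := ℂ) (c x) x = 0 := by
      apply (Submodule.mem_orthogonal C x).mp hxo
      exact Submodule.le_topologicalClosure _ (LinearMap.mem_range_self _ x)
    have h6 : RCLike.re (inner (𝕜 := ℂ) (a x) x) = RCLike.re (inner (𝕜 := ℂ) ((a - c) x) x) := by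
      rw [ContinuousLinearMap.sub_apply, inner_sub_left, map_sub, hcx]
      simp
    have h7 : RCLike.re (inner (𝕜 := ℂ) ((a - c) x) x) ≤ ‖a - c‖ * ‖x‖^2 := by
      calc RCLike.re (inner (𝕜 := ℂ) ((a - c) x) x) ≤ ‖inner (𝕜 := ℂ) ((a - c) x) x‖ :=
            RCLike.re_le_norm _
        _ ≤ ‖(a - c) x‖ * ‖x‖ := norm_inner_le_norm _ _
        _ ≤ (‖a - c‖ * ‖x‖) * ‖x‖ := by
            apply mul_le_mul_of_nonneg_right ((a - c).le_opNorm x) (norm_nonneg x)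
        _ = ‖a - c‖ * ‖x‖^2 := by ring
    have h8 := key2 x hx
    have h9 : 0 < ‖x‖ := norm_pos_iff.mpr hx0'
    nlinarith [mul_pos (sub_pos.mpr hnorm) (pow_pos h9 2)]
  have hrankle : Module.rank ℂ W ≤ Module.rank ℂ C := LinearMap.rank_le_of_injective φ hφ
  calc opRank (cutDown a ε) = Cardinal.toENat (Module.rank ℂ W) := rfl
    _ ≤ Cardinal.toENat (Module.rank ℂ C) := Cardinal.toENat.monotone' hrankle
    _ = (n : ℕ∞) := hrank
end

section
/- Let X be a compact metric space. The map Φ from ProbabilityMeasure(X), equipped with the topology induced by the Lévy–Prokhorov metric, into the weak-* dual of the Banach space C(X, ℝ) of real-valued continuous functions, defined by Φ(μ)(f) = ∫ f dμ, is a topological embedding (it is injective, continuous, and a homeomorphism onto its image). -/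
open MeasureTheory BoundedContinuousFunction

variable {X : Type*} [MetricSpace X] [CompactSpace X] [MeasurableSpace X] [BorelSpace X]

/-- Integration against a Borel probability measure on a compact metric space `X`, as an
element `Φ(μ)` of the weak-* dual of the Banach space `C(X, ℝ)`: `Φ(μ)(f) = ∫ f dμ`. -/
noncomputable def integralFunctional (ν : ProbabilityMeasure X) : WeakDual ℝ C(X, ℝ) :=
  StrongDual.toWeakDual <|
    LinearMap.mkContinuous
      { toFun := fun f => ∫ x, f x ∂(ν : Measure X)
        map_add' := fun f g => by
          simpa using integral_add ((mkOfCompact f).integrable (ν : Measure X))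
            ((mkOfCompact g).integrable (ν : Measure X))
        map_smul' := fun c f => by
          simpa using integral_smul c (fun x => f x) }
      1
      (fun f => by
        have h := (mkOfCompact f).norm_integral_le_mul_norm (ν : Measure X)
        simpa [BoundedContinuousFunction.norm_mkOfCompact, one_mul] using h.trans (by
          simp [measure_univ]))

lemma integralFunctional_apply (ν : ProbabilityMeasure X) (f : C(X, ℝ)) :
    integralFunctional ν f = ∫ x, f x ∂(ν : Measure X) := rfl

lemma integralFunctional_continuous :
    Continuous (integralFunctional (X := X)) := by
  apply WeakBilin.continuous_of_continuous_eval
  intro f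
  exact ProbabilityMeasure.continuous_integral_boundedContinuousFunction (mkOfCompact f)

lemma integralFunctional_injective :
    Function.Injective (integralFunctional (X := X)) := by
  intro μ ν h
  apply Subtype.ext
  haveI := μ.2
  haveI := ν.2
  apply ext_of_forall_lintegral_eq_of_IsFiniteMeasure
  intro f
  have lip : LipschitzWith 1 NNReal.toReal := isometry_subtype_coe.lipschitz
  set f₀ := BoundedContinuousFunction.comp _ lip f with hf₀
  have key : ∀ κ : ProbabilityMeasure X,
      ∫⁻ x, f x ∂(κ : Measure X) = ENNReal.ofReal (∫ x, f₀ x ∂(κ : Measure X)) := by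
    intro κ
    exact MeasureTheory.lintegral_coe_eq_integral f (f₀.integrable _)
  have hfeq : integralFunctional μ f₀.toContinuousMap = integralFunctional ν f₀.toContinuousMap :=
    by rw [h]
  show ∫⁻ x, f x ∂(μ : Measure X) = ∫⁻ x, f x ∂(ν : Measure X)
  rw [key μ, key ν]
  simp only [integralFunctional_apply] at hfeq
  exact congrArg ENNReal.ofReal hfeq

lemma integralFunctional_isInducing :
    Topology.IsInducing (integralFunctional (X := X)) := by
  rw [Topology.isInducing_iff_nhds]
  intro μ
  refine le_antisymm ?_ ?_
  · exact (integralFunctional_continuous.tendsto μ).le_comap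
  · -- comap ≤ 𝓝 μ : use the characterization of convergence in distribution
    have : Filter.Tendsto (id : ProbabilityMeasure X → ProbabilityMeasure X)
        (Filter.comap integralFunctional (nhds (integralFunctional μ))) (nhds μ) := by
      rw [ProbabilityMeasure.tendsto_iff_forall_integral_tendsto]
      intro g
      have h1 : Filter.Tendsto (integralFunctional (X := X))
          (Filter.comap integralFunctional (nhds (integralFunctional μ)))
          (nhds (integralFunctional μ)) := Filter.tendsto_comap
      have h2 : Continuous fun φ : WeakDual ℝ C(X, ℝ) => φ g.toContinuousMap :=
        WeakBilin.eval_continuous _ _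
      have := (h2.tendsto _).comp h1
      exact this
    exact Filter.tendsto_id'.mp this

/-- For a compact metric space `X`, the map `Φ` from `ProbabilityMeasure X`,
equipped with the Lévy–Prokhorov metric topology, to the weak-* dual of `C(X, ℝ)`,
given by `Φ(μ)(f) = ∫ f dμ`, is a topological embedding. -/
theorem stmt_17 :
    Topology.IsEmbedding fun μ : LevyProkhorov (ProbabilityMeasure X) =>
      integralFunctional (LevyProkhorov.toMeasureEquiv μ) := by
  have h1 : Topology.IsEmbedding (integralFunctional (X := X)) :=
    ⟨integralFunctional_isInducing, integralFunctional_injective⟩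
  have h2 : Topology.IsEmbedding
      ((MeasureTheory.LevyProkhorov.probabilityMeasureHomeomorph (Ω := X)).symm) :=
    (MeasureTheory.LevyProkhorov.probabilityMeasureHomeomorph (Ω := X)).symm.isEmbedding
  exact h1.comp h2
end
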